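/- Let X and Y be finite nonempty sets, let π₀, π₁ ≥ 0 with π₀ + π₁ = 1, and for each s ∈ {0,1} let P_s be a probability distribution on X × Y with marginal Q_s(x) = ∑_y P_s(x, y). For a pair of Markov kernels (K₀, K₁) from X to X, define P̃_s(x̃, y) = ∑_x K_s(x̃ | x)·P_s(x, y) and Q̃_s(x̃) = ∑_x K_s(x̃ | x)·Q_s(x), and for ρ ≥ 0 define V(ρ) = inf { π₀·d_TV(P̃₀, P₀) + π₁·d_TV(P̃₁, P₁) : (K₀, K₁) Markov kernels with d_TV(Q̃₁, Q̃₀) ≤ ρ }. Then V(ρ) → V(0) as ρ → 0⁺, i.e., the optimal value of the approximate-fairness pre-processing problem converges to the optimal value under exact statistical parity. -/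

import Mathlib

/-- A probability distribution on a finite type: nonnegative and sums to one. -/
def IsProbDist {Z : Type*} [Fintype Z] (p : Z → ℝ) : Prop :=
  (∀ z, 0 ≤ p z) ∧ ∑ z, p z = 1

/-- Total variation distance between two distributions on a finite type. -/
noncomputable def dTV {Z : Type*} [Fintype Z] (p q : Z → ℝ) : ℝ :=
  (1 / 2) * ∑ z, |p z - q z|

/-- A Markov kernel from `X` to `X`: `K x' x` is the probability of moving to `x'`
from `x`, so each column `K · x` is a probability distribution. -/
def IsMarkovKernel {X : Type*} [Fintype X] (K : X → X → ℝ) : Prop :=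
  ∀ x, IsProbDist (fun x' => K x' x)

/-- Repaired joint distribution `P̃` obtained from `P` by the kernel `K` acting on
the `X`-component. -/
noncomputable def repairJoint {X Y : Type*} [Fintype X] [Fintype Y]
    (K : X → X → ℝ) (P : X × Y → ℝ) : X × Y → ℝ :=
  fun p => ∑ x : X, K p.1 x * P (x, p.2)

/-- Pushforward of a distribution on `X` through the kernel `K`. -/
noncomputable def pushforward {X : Type*} [Fintype X] (K : X → X → ℝ) (q : X → ℝ) :
    X → ℝ := fun x' => ∑ x, K x' x * q x

/-- the optimal value of the approximate-fairness pre-processing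
problem converges, as `ρ → 0⁺`, to the optimal value under exact statistical
parity. -/
lemma dTV_nonneg {Z : Type*} [Fintype Z] (p q : Z → ℝ) : 0 ≤ dTV p q := by
  unfold dTV
  positivity

lemma dTV_triangle {Z : Type*} [Fintype Z] (p q r : Z → ℝ) :
    dTV p r ≤ dTV p q + dTV q r := by
  unfold dTV
  rw [← mul_add, ← Finset.sum_add_distrib]
  gcongr with z
  exact abs_sub_le _ _ _

lemma pushforward_probDist {X : Type*} [Fintype X] {K : X → X → ℝ} {q : X → ℝ}
    (hK : IsMarkovKernel K) (hq : IsProbDist q) : IsProbDist (pushforward K q) := by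
  constructor
  · intro x'
    exact Finset.sum_nonneg fun x _ => mul_nonneg ((hK x).1 x') (hq.1 x)
  · rw [show ∑ x', pushforward K q x' = ∑ x, (∑ x', K x' x) * q x by
      unfold pushforward; rw [Finset.sum_comm]; simp [Finset.sum_mul]]
    simp only [(fun x => (hK x).2 : ∀ x, ∑ x', K x' x = 1)]
    simpa using hq.2

lemma repairJoint_nonneg {X Y : Type*} [Fintype X] [Fintype Y] {K : X → X → ℝ}
    {P : X × Y → ℝ} (hK : IsMarkovKernel K) (hP : IsProbDist P) (p : X × Y) :
    0 ≤ repairJoint K P p :=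
  Finset.sum_nonneg fun x _ => mul_nonneg ((hK x).1 p.1) (hP.1 _)

lemma repairJoint_marginal {X Y : Type*} [Fintype X] [Fintype Y] (K : X → X → ℝ)
    (P : X × Y → ℝ) (x' : X) :
    ∑ y, repairJoint K P (x', y) = pushforward K (fun x => ∑ y, P (x, y)) x' := by
  unfold repairJoint pushforward
  rw [Finset.sum_comm]
  simp [Finset.mul_sum]

lemma marginal_probDist {X Y : Type*} [Fintype X] [Fintype Y] {P : X × Y → ℝ}
    (hP : IsProbDist P) : IsProbDist (fun x => ∑ y, P (x, y)) := by
  refine ⟨fun x => Finset.sum_nonneg fun y _ => hP.1 _, ?_⟩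
  rw [← hP.2, Fintype.sum_prod_type]

lemma comp_sum {X : Type*} [Fintype X] (T K : X → X → ℝ) (f : X → ℝ) (x' : X) :
    ∑ x, (∑ z, T x' z * K z x) * f x = ∑ z, T x' z * (∑ x, K z x * f x) := by
  simp only [Finset.sum_mul, Finset.mul_sum, mul_assoc]
  exact Finset.sum_comm

lemma repair_construction {X Y : Type*} [Fintype X] [Fintype Y]
    (P1 : X × Y → ℝ) (hP1 : IsProbDist P1)
    (Q1 : X → ℝ) (hQ1 : Q1 = fun x => ∑ y, P1 (x, y))
    (q' : X → ℝ) (hq' : IsProbDist q')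
    (K1 : X → X → ℝ) (hK1 : IsMarkovKernel K1) :
    ∃ K1' : X → X → ℝ, IsMarkovKernel K1' ∧
      (∀ x', pushforward K1' Q1 x' = q' x') ∧
      dTV (repairJoint K1' P1) P1
        ≤ dTV (repairJoint K1 P1) P1 + dTV (pushforward K1 Q1) q' := by
  classical
  have hQ1p : IsProbDist Q1 := hQ1 ▸ marginal_probDist hP1
  set q := pushforward K1 Q1 with hqdef
  have hq : IsProbDist q := pushforward_probDist hK1 hQ1p
  set ε := dTV q q' with hεdef
  have hε0 : 0 ≤ ε := dTV_nonneg _ _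
  set a : X → ℝ := fun z => max (q z - q' z) 0 with hadef
  set b : X → ℝ := fun z => max (q' z - q z) 0 with hbdef
  have ha : ∀ z, 0 ≤ a z := fun z => le_max_right _ _
  have hb : ∀ z, 0 ≤ b z := fun z => le_max_right _ _
  have hba : ∀ z, b z - a z = q' z - q z := by
    intro z
    rcases le_total (q z) (q' z) with h | h
    · rw [hadef, hbdef]
      simp only
      rw [max_eq_right (by linarith : q z - q' z ≤ 0), max_eq_left (by linarith : (0:ℝ) ≤ q' z - q z)]
      ring
    · rw [hadef, hbdef]
      simp only
      rw [max_eq_left (by linarith : (0:ℝ) ≤ q z - q' z), max_eq_right (by linarith : q' z - q z ≤ 0)]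
      ring
  have habs : ∀ z, |q z - q' z| = a z + b z := by
    intro z
    rcases le_total (q z) (q' z) with h | h
    · rw [abs_of_nonpos (by linarith : q z - q' z ≤ 0), hadef, hbdef]
      simp only
      rw [max_eq_right (by linarith : q z - q' z ≤ 0), max_eq_left (by linarith : (0:ℝ) ≤ q' z - q z)]
      ring
    · rw [abs_of_nonneg (by linarith : (0:ℝ) ≤ q z - q' z), hadef, hbdef]
      simp only
      rw [max_eq_left (by linarith : (0:ℝ) ≤ q z - q' z), max_eq_right (by linarith : q' z - q z ≤ 0)]
      ring
  have hsum_eq : ∑ z, a z = ∑ z, b z := by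
    have h1 : ∑ z, (b z - a z) = 0 := by
      calc ∑ z, (b z - a z) = ∑ z, (q' z - q z) := Finset.sum_congr rfl fun z _ => hba z
      _ = (∑ z, q' z) - ∑ z, q z := Finset.sum_sub_distrib _ _
      _ = 0 := by rw [hq'.2, hq.2]; ring
    have h2 : ∑ z, (b z - a z) = (∑ z, b z) - ∑ z, a z := Finset.sum_sub_distrib _ _
    linarith
  have hsa : ∑ z, a z = ε := by
    have h2 : ∑ z, |q z - q' z| = (∑ z, a z) + ∑ z, b z := by
      rw [← Finset.sum_add_distrib]
      exact Finset.sum_congr rfl fun z _ => habs z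
    have h3 : ε = (1/2) * ∑ z, |q z - q' z| := rfl
    rw [h3, h2, ← hsum_eq]; ring
  have hsb : ∑ z, b z = ε := hsum_eq ▸ hsa
  by_cases hε : ε = 0
  · refine ⟨K1, hK1, ?_, by rw [hε]; simp⟩
    intro x'
    have hz : ∀ z ∈ Finset.univ, a z = 0 := by
      rw [← Finset.sum_eq_zero_iff_of_nonneg (fun z _ => ha z)]
      rw [hsa]; exact hε
    have hz' : ∀ z ∈ Finset.univ, b z = 0 := by
      rw [← Finset.sum_eq_zero_iff_of_nonneg (fun z _ => hb z)]
      rw [hsb]; exact hε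
    have := hba x'
    rw [hz x' (Finset.mem_univ _), hz' x' (Finset.mem_univ _)] at this
    have : q x' = q' x' := by linarith
    rw [← this]
  -- main case: ε > 0
  have hεpos : 0 < ε := lt_of_le_of_ne hε0 (Ne.symm hε)
  have haq : ∀ z, a z ≤ q z := fun z =>
    max_le (by linarith [hq'.1 z]) (hq.1 z)
  set r : X → ℝ := fun z => a z / q z with hrdef
  have hr0 : ∀ z, 0 ≤ r z := fun z => div_nonneg (ha z) (hq.1 z)
  have hrq : ∀ z, r z * q z = a z := by
    intro z
    by_cases h : q z = 0
    · have h0 : a z = 0 := le_antisymm (h ▸ haq z) (ha z)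
      rw [hrdef]; simp [h, h0]
    · rw [hrdef]; field_simp
  have hr1 : ∀ z, r z ≤ 1 := by
    intro z
    by_cases h : q z = 0
    · have h0 : a z = 0 := le_antisymm (h ▸ haq z) (ha z)
      rw [hrdef]; simp [h, h0]
    · rw [hrdef]
      exact (div_le_one (lt_of_le_of_ne (hq.1 z) (Ne.symm h))).2 (haq z)
  set T : X → X → ℝ := fun x' x => (if x' = x then 1 - r x else 0) + r x * b x' / ε
    with hTdef
  have hT0 : ∀ x' x, 0 ≤ T x' x := by
    intro x' x
    rw [hTdef]
    simp only
    apply add_nonneg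
    · split_ifs with h
      · linarith [hr1 x]
      · exact le_refl 0
    · exact div_nonneg (mul_nonneg (hr0 x) (hb x')) hε0
  have hTgen : ∀ (g : X → ℝ) (x' : X), ∑ z, T x' z * g z
      = (1 - r x') * g x' + (b x' / ε) * ∑ z, r z * g z := by
    intro g x'
    have h1 : ∀ z, T x' z * g z
        = (if x' = z then (1 - r z) * g z else 0) + (b x' / ε) * (r z * g z) := by
      intro z; rw [hTdef]; simp only; split_ifs <;> ring
    rw [Finset.sum_congr rfl fun z _ => h1 z, Finset.sum_add_distrib, ← Finset.mul_sum]
    simp [Finset.sum_ite_eq]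
  have hTsum : ∀ x : X, ∑ x', T x' x = 1 := by
    intro x
    have h1 : ∀ x', T x' x = (if x' = x then 1 - r x else 0) + (r x / ε) * b x' := by
      intro x'; rw [hTdef]; simp only; ring_nf
    rw [Finset.sum_congr rfl fun x' _ => h1 x', Finset.sum_add_distrib, ← Finset.mul_sum,
      hsb, Finset.sum_ite_eq', div_mul_cancel₀ _ hε]
    simp
  refine ⟨fun x' x => ∑ z, T x' z * K1 z x, ?_, ?_, ?_⟩
  · intro x
    constructor
    · intro x'
      exact Finset.sum_nonneg fun z _ => mul_nonneg (hT0 x' z) ((hK1 x).1 z)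
    · simp only
      rw [Finset.sum_comm]
      have : ∀ z, ∑ x', T x' z * K1 z x = K1 z x := by
        intro z
        rw [← Finset.sum_mul, hTsum z, one_mul]
      rw [Finset.sum_congr rfl fun z _ => this z]
      exact (hK1 x).2
  · intro x'
    show ∑ x, (∑ z, T x' z * K1 z x) * Q1 x = q' x'
    rw [comp_sum]
    have hq2 : ∀ z, (∑ x, K1 z x * Q1 x) = q z := fun z => rfl
    rw [Finset.sum_congr rfl fun z _ => by rw [hq2 z]]
    rw [hTgen q x']
    rw [Finset.sum_congr rfl fun z _ => hrq z, hsa, div_mul_cancel₀ _ hε]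
    have h3 := hba x'
    have h4 := hrq x'
    nlinarith [h3, h4]
  · -- dTV bound
    set Pt := repairJoint K1 P1 with hPtdef
    have hPt0 : ∀ p : X × Y, 0 ≤ Pt p := fun p => repairJoint_nonneg hK1 hP1 p
    have hPtm : ∀ z, ∑ y, Pt (z, y) = q z := by
      intro z
      rw [hPtdef, repairJoint_marginal, hqdef, hQ1]
    have hD : ∀ p : X × Y,
        repairJoint (fun x' x => ∑ z, T x' z * K1 z x) P1 p
          = ∑ z, T p.1 z * Pt (z, p.2) := by
      intro p
      show ∑ x, (∑ z, T p.1 z * K1 z x) * P1 (x, p.2) = _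
      rw [comp_sum]
      rfl
    have hpoint : ∀ p : X × Y,
        |repairJoint (fun x' x => ∑ z, T x' z * K1 z x) P1 p - Pt p|
          ≤ r p.1 * Pt p + (b p.1 / ε) * ∑ z, r z * Pt (z, p.2) := by
      intro p
      rw [hD p, hTgen (fun z => Pt (z, p.2)) p.1]
      have hpp : Pt (p.1, p.2) = Pt p := by rw [Prod.mk.eta]
      have h1 : 0 ≤ r p.1 * Pt p := mul_nonneg (hr0 _) (hPt0 _)
      have h2 : 0 ≤ (b p.1 / ε) * ∑ z, r z * Pt (z, p.2) :=
        mul_nonneg (div_nonneg (hb _) hε0)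
          (Finset.sum_nonneg fun z _ => mul_nonneg (hr0 z) (hPt0 _))
      rw [abs_le]
      constructor <;> nlinarith [hpp]
    have hsum1 : ∑ p : X × Y, r p.1 * Pt p = ε := by
      rw [Fintype.sum_prod_type]
      have : ∀ x : X, ∑ y, r x * Pt (x, y) = a x := by
        intro x
        rw [← Finset.mul_sum, hPtm, hrq]
      rw [Finset.sum_congr rfl fun x _ => this x, hsa]
    have hsum2 : ∑ p : X × Y, (b p.1 / ε) * ∑ z, r z * Pt (z, p.2) = ε := by
      rw [Fintype.sum_prod_type]
      have hS : ∑ y, ∑ z, r z * Pt (z, y) = ε := by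
        rw [Finset.sum_comm]
        have : ∀ z, ∑ y, r z * Pt (z, y) = a z := by
          intro z; rw [← Finset.mul_sum, hPtm, hrq]
        rw [Finset.sum_congr rfl fun z _ => this z, hsa]
      have : ∀ x : X, ∑ y, (b x / ε) * ∑ z, r z * Pt (z, y) = b x := by
        intro x
        rw [← Finset.mul_sum, hS, div_mul_cancel₀ _ hε]
      rw [Finset.sum_congr rfl fun x _ => this x, hsb]
    have hbound : dTV (repairJoint (fun x' x => ∑ z, T x' z * K1 z x) P1) Pt ≤ ε := by
      have h1 : ∑ p : X × Y, |repairJoint (fun x' x => ∑ z, T x' z * K1 z x) P1 p - Pt p|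
          ≤ ε + ε := by
        calc ∑ p : X × Y, |repairJoint (fun x' x => ∑ z, T x' z * K1 z x) P1 p - Pt p|
            ≤ ∑ p : X × Y, (r p.1 * Pt p + (b p.1 / ε) * ∑ z, r z * Pt (z, p.2)) :=
              Finset.sum_le_sum fun p _ => hpoint p
          _ = ε + ε := by rw [Finset.sum_add_distrib, hsum1, hsum2]
      show (1/2 : ℝ) * ∑ p : X × Y, |_| ≤ ε
      linarith
    calc dTV (repairJoint (fun x' x => ∑ z, T x' z * K1 z x) P1) P1
        ≤ dTV (repairJoint (fun x' x => ∑ z, T x' z * K1 z x) P1) Pt + dTV Pt P1 :=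
          dTV_triangle _ _ _
      _ ≤ dTV Pt P1 + ε := by linarith [hbound]
      _ = dTV (repairJoint K1 P1) P1 + dTV (pushforward K1 Q1) q' := by rw [hPtdef, hεdef, hqdef]

theorem optimal_value_tendsto
    {X Y : Type*} [Fintype X] [Fintype Y] [Nonempty X] [Nonempty Y]
    (π0 π1 : ℝ) (hπ0 : 0 ≤ π0) (hπ1 : 0 ≤ π1) (hπ : π0 + π1 = 1)
    (P0 P1 : X × Y → ℝ) (hP0 : IsProbDist P0) (hP1 : IsProbDist P1)
    (Q0 Q1 : X → ℝ)
    (hQ0 : Q0 = fun x => ∑ y : Y, P0 (x, y))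
    (hQ1 : Q1 = fun x => ∑ y : Y, P1 (x, y))
    (V : ℝ → ℝ)
    (hV : ∀ ρ : ℝ, V ρ =
      sInf {v : ℝ | ∃ K0 K1 : X → X → ℝ, IsMarkovKernel K0 ∧ IsMarkovKernel K1 ∧
        dTV (pushforward K1 Q1) (pushforward K0 Q0) ≤ ρ ∧
        v = π0 * dTV (repairJoint K0 P0) P0 + π1 * dTV (repairJoint K1 P1) P1}) :
    Filter.Tendsto V (nhdsWithin 0 (Set.Ioi 0)) (nhds (V 0)) := by
  classical
  set S : ℝ → Set ℝ := fun ρ =>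
    {v : ℝ | ∃ K0 K1 : X → X → ℝ, IsMarkovKernel K0 ∧ IsMarkovKernel K1 ∧
      dTV (pushforward K1 Q1) (pushforward K0 Q0) ≤ ρ ∧
      v = π0 * dTV (repairJoint K0 P0) P0 + π1 * dTV (repairJoint K1 P1) P1} with hS
  have hVS : ∀ ρ, V ρ = sInf (S ρ) := hV
  have hbdd : ∀ ρ : ℝ, BddBelow (S ρ) := by
    intro ρ
    refine ⟨0, fun v hv => ?_⟩
    obtain ⟨K0, K1, _, _, _, hveq⟩ := hv
    have h1 := dTV_nonneg (repairJoint K0 P0) P0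
    have h2 := dTV_nonneg (repairJoint K1 P1) P1
    nlinarith
  have hQ0p : IsProbDist Q0 := hQ0 ▸ marginal_probDist hP0
  have hQ1p : IsProbDist Q1 := hQ1 ▸ marginal_probDist hP1
  have hne : ∀ ρ : ℝ, 0 ≤ ρ → (S ρ).Nonempty := by
    intro ρ hρ
    obtain ⟨x0⟩ := ‹Nonempty X›
    set K : X → X → ℝ := fun x' _ => if x' = x0 then 1 else 0 with hK
    have hKm : IsMarkovKernel K := by
      intro x
      constructor
      · intro x'; rw [hK]; simp only; split_ifs <;> norm_num
      · simp [hK]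
    have hpush : ∀ Q : X → ℝ, IsProbDist Q → ∀ x',
        pushforward K Q x' = if x' = x0 then 1 else 0 := by
      intro Q hQ x'
      show ∑ x, K x' x * Q x = _
      rw [hK]
      simp only
      split_ifs with h
      · simp [hQ.2]
      · simp
    refine ⟨_, K, K, hKm, hKm, ?_, rfl⟩
    have hz : ∀ x', pushforward K Q1 x' - pushforward K Q0 x' = 0 := by
      intro x'; rw [hpush Q1 hQ1p, hpush Q0 hQ0p]; ring
    have hd : dTV (pushforward K Q1) (pushforward K Q0) = 0 := by
      show (1/2 : ℝ) * ∑ x', |pushforward K Q1 x' - pushforward K Q0 x'| = 0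
      rw [Finset.sum_congr rfl fun x' _ => by rw [hz x', abs_zero]]
      simp
    rw [hd]; exact hρ
  have hmono : ∀ ρ : ℝ, 0 ≤ ρ → V ρ ≤ V 0 := by
    intro ρ hρ
    rw [hVS, hVS]
    apply csInf_le_csInf (hbdd ρ) (hne 0 le_rfl)
    intro v hv
    obtain ⟨K0, K1, h0, h1, hd, he⟩ := hv
    exact ⟨K0, K1, h0, h1, hd.trans hρ, he⟩
  have hlow : ∀ ρ : ℝ, 0 < ρ → V 0 - ρ ≤ V ρ := by
    intro ρ hρ
    rw [hVS ρ]
    apply le_csInf (hne ρ hρ.le)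
    intro v hv
    obtain ⟨K0, K1, h0, h1, hd, he⟩ := hv
    obtain ⟨K1', h1', hpush', hdtv⟩ := repair_construction P1 hP1 Q1 hQ1
      (pushforward K0 Q0) (pushforward_probDist h0 hQ0p) K1 h1
    have hmem : π0 * dTV (repairJoint K0 P0) P0 + π1 * dTV (repairJoint K1' P1) P1 ∈ S 0 := by
      refine ⟨K0, K1', h0, h1', ?_, rfl⟩
      have hz : ∀ x', pushforward K1' Q1 x' - pushforward K0 Q0 x' = 0 := fun x' => by
        rw [hpush' x']; ring
      show (1/2 : ℝ) * ∑ x', |pushforward K1' Q1 x' - pushforward K0 Q0 x'| ≤ 0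
      rw [Finset.sum_congr rfl fun x' _ => by rw [hz x', abs_zero]]
      simp
    have hV0 : V 0 ≤ π0 * dTV (repairJoint K0 P0) P0 + π1 * dTV (repairJoint K1' P1) P1 := by
      rw [hVS 0]; exact csInf_le (hbdd 0) hmem
    have hεb : 0 ≤ dTV (pushforward K1 Q1) (pushforward K0 Q0) := dTV_nonneg _ _
    have hπ1le : π1 ≤ 1 := by linarith
    have hm1 : π1 * dTV (repairJoint K1' P1) P1
        ≤ π1 * (dTV (repairJoint K1 P1) P1 + dTV (pushforward K1 Q1) (pushforward K0 Q0)) :=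
      mul_le_mul_of_nonneg_left hdtv hπ1
    have hm2 : π1 * dTV (pushforward K1 Q1) (pushforward K0 Q0)
        ≤ dTV (pushforward K1 Q1) (pushforward K0 Q0) :=
      mul_le_of_le_one_left hεb hπ1le
    rw [he]
    nlinarith [hm1, hm2, hd, hV0]
  have hg : Filter.Tendsto (fun ρ => V 0 - ρ) (nhdsWithin 0 (Set.Ioi 0)) (nhds (V 0)) := by
    have h : Filter.Tendsto (fun ρ : ℝ => V 0 - ρ) (nhds 0) (nhds (V 0 - 0)) :=
      tendsto_const_nhds.sub Filter.tendsto_id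
    rw [sub_zero] at h
    exact h.mono_left nhdsWithin_le_nhds
  refine tendsto_of_tendsto_of_tendsto_of_le_of_le' hg tendsto_const_nhds ?_ ?_
  · filter_upwards [self_mem_nhdsWithin] with ρ hρ
    exact hlow ρ hρ
  · filter_upwards [self_mem_nhdsWithin] with ρ hρ
    exact hmono ρ (le_of_lt hρ)
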